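/- On any reflexive, transitive, strongly convergent frame, the derived belief modality satisfies negative introspection: for any proposition φ : W → Prop and world w, if it is not the case that φ holds at all R_B-successors of w, then at every R_B-successor v of w, it is not the case that φ holds at all R_B-successors of v. (¬[B]φ → [B]¬[B]φ is valid.) -/
import Mathlib

def RB {W : Type*} (R : W → W → Prop) (w u : W) : Prop := ∀ v, R w v → R v u

theorem B_neg_introspection {W : Type*} [Nonempty W] (R : W → W → Prop)
    (hrefl : ∀ w, R w w) (htrans : ∀ w v u, R w v → R v u → R w u)
    (hconv : ∀ w, ∃ u, ∀ v, R w v → R v u)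
    (φ : W → Prop) (w : W) (h : ¬ ∀ u, RB R w u → φ u) :
    ∀ v, RB R w v → ¬ ∀ u, RB R v u → φ u := by
  intro v hwv hv
  apply h
  intro u hwu
  exact hv u (fun x hvx => hwu x (htrans w v x (hwv w (hrefl w)) hvx))
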